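/- There exist ε > 0, δ ∈ (0,1), and a local randomizer R : {0,1} → {1,2,3} such that R is a deletion (ε,δ)-LDP randomizer but R is not a (2ε, 2δ)-replacement LDP randomizer. Concretely, for ε = 1/4 and δ = 1/6, the randomizer with R(0) taking value 1 with probability e^ε/3, value 2 with probability e^{−ε}(1/3 − δ), and value 3 with the remaining probability, and R(1) taking value 1 with probability e^{−ε}/3, value 2 with probability e^ε/3 + δ, and value 3 with the remaining probability, is deletion (ε,δ)-LDP with uniform reference distribution on {1,2,3}, yet satisfies Pr[R(1) = 2] > e^{2ε}·Pr[R(0) = 2] + 2δ. -/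
import Mathlib


open scoped ENNReal

/-- Probability that a sample from the PMF `p` lands in the set `S` (as a real number). -/
noncomputable def pr {Y : Type*} (p : PMF Y) (S : Set Y) : ℝ :=
  (p.toOuterMeasure S).toReal

lemma pr_eq_sum (p : PMF (Fin 3)) (S : Set (Fin 3)) :
    pr p S = ∑ y : Fin 3, S.indicator (fun y => (p y).toReal) y := by
  classical
  unfold pr
  rw [PMF.toOuterMeasure_apply, tsum_fintype, ENNReal.toReal_sum]
  · exact Finset.sum_congr rfl fun y _ => by by_cases h : y ∈ S <;> simp [Set.indicator, h]
  · intro y _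
    by_cases h : y ∈ S <;> simp [Set.indicator, h, PMF.apply_ne_top]

/-- The probability table of the counterexample randomizer. -/
noncomputable def gtab (a b : ℝ) : Bool → Fin 3 → ℝ := fun x =>
  if x then ![b / 3, a / 3 + 1/6, 1 - (b / 3 + a / 3 + 1/6)]
  else ![a / 3, b * (1/3 - 1/6), 1 - (a / 3 + b * (1/3 - 1/6))]

lemma gtab_f0 (a b : ℝ) : gtab a b false 0 = a / 3 := rfl
lemma gtab_f1 (a b : ℝ) : gtab a b false 1 = b * (1/3 - 1/6) := rfl
lemma gtab_f2 (a b : ℝ) : gtab a b false 2 = 1 - (a / 3 + b * (1/3 - 1/6)) := rfl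
lemma gtab_t0 (a b : ℝ) : gtab a b true 0 = b / 3 := rfl
lemma gtab_t1 (a b : ℝ) : gtab a b true 1 = a / 3 + 1/6 := rfl
lemma gtab_t2 (a b : ℝ) : gtab a b true 2 = 1 - (b / 3 + a / 3 + 1/6) := rfl

set_option maxHeartbeats 2000000 in
/-- There exist `ε > 0`, `δ ∈ (0,1)` — concretely `ε = 1/4`, `δ = 1/6` — and a local
randomizer `R : {0,1} → {1,2,3}` (outputs encoded as `Fin 3`, with `0, 1, 2` standing
for the values `1, 2, 3`) with the stated probabilities, which is a deletion
`(ε, δ)`-LDP randomizer with uniform reference distribution on `{1,2,3}`, yet satisfies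
`Pr[R(1) = 2] > e^{2ε} Pr[R(0) = 2] + 2δ`, hence is not `(2ε, 2δ)`-replacement LDP. -/
theorem deletion_to_replacement_counterexample :
    ∃ (ε δ : ℝ), ε = 1 / 4 ∧ δ = 1 / 6 ∧ 0 < ε ∧ 0 < δ ∧ δ < 1 ∧
    ∃ R : Bool → PMF (Fin 3),
      -- the probabilities of R(0)
      (R false 0).toReal = Real.exp ε / 3 ∧
      (R false 1).toReal = Real.exp (-ε) * (1 / 3 - δ) ∧
      (R false 2).toReal = 1 - (Real.exp ε / 3 + Real.exp (-ε) * (1 / 3 - δ)) ∧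
      -- the probabilities of R(1)
      (R true 0).toReal = Real.exp (-ε) / 3 ∧
      (R true 1).toReal = Real.exp ε / 3 + δ ∧
      (R true 2).toReal = 1 - (Real.exp (-ε) / 3 + Real.exp ε / 3 + δ) ∧
      -- R is deletion (ε, δ)-LDP with uniform reference distribution
      (∀ (x : Bool) (S : Set (Fin 3)),
        Real.exp (-ε) * (pr (PMF.uniformOfFintype (Fin 3)) S - δ) ≤ pr (R x) S ∧
        pr (R x) S ≤ Real.exp ε * pr (PMF.uniformOfFintype (Fin 3)) S + δ) ∧
      -- but R is not (2ε, 2δ)-replacement LDP: the bound fails on x = 1, x' = 0, S = {2}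
      (R true 1).toReal > Real.exp (2 * ε) * (R false 1).toReal + 2 * δ := by
  classical
  obtain ⟨a, ha_def⟩ : ∃ a : ℝ, a = Real.exp (1/4) := ⟨_, rfl⟩
  obtain ⟨b, hb_def⟩ : ∃ b : ℝ, b = Real.exp (-(1/4) : ℝ) := ⟨_, rfl⟩
  have hab : a * b = 1 := by rw [ha_def, hb_def, ← Real.exp_add]; norm_num
  have hap : (0:ℝ) < a := ha_def ▸ Real.exp_pos _
  have hbp : (0:ℝ) < b := hb_def ▸ Real.exp_pos _
  have h4 : a ^ 4 = Real.exp 1 := by rw [ha_def, ← Real.exp_nat_mul]; norm_num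
  have hlo := Real.exp_one_gt_d9
  have hhi := Real.exp_one_lt_d9
  have halo : (1.28:ℝ) < a := by
    nlinarith [sq_nonneg (a - 1.28), sq_nonneg (a + 1.28), sq_nonneg (a^2 - 1.6384),
      sq_nonneg (a^2 + 1.6384)]
  have hahi : a < 1.29 := by
    nlinarith [sq_nonneg (a - 1.29), sq_nonneg (a + 1.29), sq_nonneg (a^2 - 1.6641),
      sq_nonneg (a^2 + 1.6641)]
  have hblo : (0.77:ℝ) < b := by nlinarith
  have hbhi : b < 0.79 := by nlinarith
  have e0 : (0:ℝ) ≤ a / 3 := by positivity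
  have e1 : (0:ℝ) ≤ b * (1/3 - 1/6) := by nlinarith
  have e2 : (0:ℝ) ≤ 1 - (a / 3 + b * (1/3 - 1/6)) := by nlinarith
  have e3 : (0:ℝ) ≤ b / 3 := by positivity
  have e4 : (0:ℝ) ≤ a / 3 + 1/6 := by positivity
  have e5 : (0:ℝ) ≤ 1 - (b / 3 + a / 3 + 1/6) := by nlinarith
  have hgv : ∀ x y, 0 ≤ gtab a b x y := by
    intro x y
    cases x
    · fin_cases y
      exacts [e0, e1, e2]
    · fin_cases y
      exacts [e3, e4, e5]
  have hsum : ∀ x, ∑ y : Fin 3, ENNReal.ofReal (gtab a b x y) = 1 := by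
    intro x
    have h01 : 0 ≤ gtab a b x 0 + gtab a b x 1 := add_nonneg (hgv x 0) (hgv x 1)
    rw [Fin.sum_univ_three, ← ENNReal.ofReal_add (hgv x 0) (hgv x 1),
      ← ENNReal.ofReal_add h01 (hgv x 2)]
    have hone : gtab a b x 0 + gtab a b x 1 + gtab a b x 2 = 1 := by
      cases x
      · rw [gtab_f0, gtab_f1, gtab_f2]; ring
      · rw [gtab_t0, gtab_t1, gtab_t2]; ring
    rw [hone, ENNReal.ofReal_one]
  refine ⟨1/4, 1/6, rfl, rfl, by norm_num, by norm_num, by norm_num,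
    fun x => PMF.ofFintype (fun y => ENNReal.ofReal (gtab a b x y)) (hsum x), ?_⟩
  have hR : ∀ x y, ((PMF.ofFintype (fun y => ENNReal.ofReal (gtab a b x y)) (hsum x)) y).toReal
      = gtab a b x y := by
    intro x y
    rw [PMF.ofFintype_apply, ENNReal.toReal_ofReal (hgv x y)]
  have huni : ∀ y : Fin 3, ((PMF.uniformOfFintype (Fin 3)) y).toReal = 1/3 := by
    intro y
    rw [PMF.uniformOfFintype_apply]
    norm_num
  refine ⟨?_, ?_, ?_, ?_, ?_, ?_, ?_, ?_⟩
  · rw [hR, gtab_f0, ha_def]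
  · rw [hR, gtab_f1, hb_def]
  · rw [hR, gtab_f2, ha_def, hb_def]
  · rw [hR, gtab_t0, hb_def]
  · rw [hR, gtab_t1, ha_def]
  · rw [hR, gtab_t2, ha_def, hb_def]
  · intro x S
    rw [pr_eq_sum, pr_eq_sum, Fin.sum_univ_three, Fin.sum_univ_three]
    simp only [hR, huni]
    by_cases h0 : (0 : Fin 3) ∈ S <;> by_cases h1 : (1 : Fin 3) ∈ S <;>
      by_cases h2 : (2 : Fin 3) ∈ S <;>
      simp only [Set.indicator, h0, h1, h2, if_true, if_false] <;>
      cases x <;>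
      simp only [← ha_def, ← hb_def, gtab_f0, gtab_f1, gtab_f2, gtab_t0, gtab_t1, gtab_t2] <;>
      constructor <;> nlinarith
  · rw [hR, hR, gtab_t1, gtab_f1]
    have h2e : Real.exp (2 * ((1:ℝ)/4)) = a * a := by
      rw [ha_def, ← Real.exp_add]; norm_num
    rw [h2e]
    have haab : a * (a * b) = a := by rw [hab, mul_one]
    nlinarith [haab, halo]
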